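/- Let α ∈ ℝ be irrational, E ∈ ℝ, and let v, w be even real trigonometric polynomials of degrees d and l. If there exists H ∈ C^ω(𝕋, Sp_{2l×2}(ℝ)) such that L^v_{E,w}(x)H(x) = H(x+α) for all x ∈ ℝ, then the dual finite-range operator L^w_{v,α,0}, acting on ℓ²(ℤ,ℂ) by (Lu)_n = Σ_{k=−d}^d v̂_k u_{n+k} + w(nα)u_n, has two linearly independent ℓ²(ℤ,ℂ) eigenfunctions with eigenvalue E; in particular E is an eigenvalue of L^w_{v,α,0} of multiplicity at least 2. -/

import Mathlib

open scoped Real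
open Filter Matrix

noncomputable section

/-- The trigonometric polynomial with coefficients `c` (supported in `[-d,d]`),
evaluated at a complex point: `v(z) = Σ_{k=-d}^d c_k e^{2πikz}`. -/
def trigPoly (d : ℕ) (c : ℤ → ℝ) (z : ℂ) : ℂ :=
  ∑ k ∈ Finset.Icc (-(d:ℤ)) (d:ℤ), (c k : ℂ) * Complex.exp (2 * Real.pi * Complex.I * k * z)

/-- The `2m × 2m` one-step transfer (cocycle) matrix of the finite-range operator with
symbol coefficients `chat` (of degree `m`) and potential `pot`, at energy `E`: the first row is
`(1/chat m)·(-chat (m-1), …, -chat 1, E - pot x - chat 0, -chat (-1), …, -chat (-m))`,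
the entries just below the diagonal are `1`, and all other entries vanish. -/
def dualMat (m : ℕ) (chat : ℤ → ℝ) (pot : ℝ → ℂ) (E : ℂ) (x : ℝ) :
    Matrix (Fin (2*m)) (Fin (2*m)) ℂ :=
  fun i j =>
    if (i : ℕ) = 0 then
      ((chat m : ℂ))⁻¹ * (if (j : ℕ) + 1 = m then E - pot x - (chat 0 : ℂ)
        else -((chat ((m:ℤ) - 1 - (j : ℕ)) : ℂ)))
    else if (i : ℕ) = (j : ℕ) + 1 then 1 else 0

/-- The `l × l` upper-triangular Toeplitz matrix with first row `(c l, c (l-1), …, c 1)`. -/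
def toeplitz (l : ℕ) (c : ℤ → ℝ) : Matrix (Fin l) (Fin l) ℝ :=
  fun i j => if (i : ℕ) ≤ (j : ℕ) then c ((l : ℤ) - (j : ℕ) + (i : ℕ)) else 0

/-- The symplectic form `S = [[0, -Cᵀ],[C, 0]]` built from the Toeplitz matrix of `c`. -/
def sympForm (l : ℕ) (c : ℤ → ℝ) : Matrix (Fin (2*l)) (Fin (2*l)) ℝ :=
  Matrix.reindex (finSumFinEquiv.trans (finCongr (by omega)))
    (finSumFinEquiv.trans (finCongr (by omega)))
    (Matrix.fromBlocks 0 (-(toeplitz l c)ᵀ) (toeplitz l c) 0)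

/-- `J = [[0,1],[-1,0]]`. -/
def Jmat : Matrix (Fin 2) (Fin 2) ℝ := !![0, 1; -1, 0]

/-- Membership in `Sp_{2l×2}(ℝ) = {F : Fᵀ S F = J}`. -/
def IsSymplCol (l : ℕ) (c : ℤ → ℝ) (F : Matrix (Fin (2*l)) (Fin 2) ℝ) : Prop :=
  Fᵀ * sympForm l c * F = Jmat

/-- `H ∈ C^ω(𝕋, X)` for a real matrix valued map: every entry is real-analytic
on ℝ and `H` is `1`-periodic. -/
def IsAnalyticPeriodic {m n : ℕ} (H : ℝ → Matrix (Fin m) (Fin n) ℝ) : Prop :=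
  (∀ i j, AnalyticOnNhd ℝ (fun x => H x i j) Set.univ) ∧ ∀ x : ℝ, H (x + 1) = H x


open MeasureTheory AddCircle ContinuousMap

section FourierAux

lemma integrableAux (f : AddCircle (1:ℝ) → ℂ) (hf : Continuous f) (n : ℤ) :
    Integrable (fun t => fourier n t • f t) haarAddCircle :=
  (((fourier n).continuous).smul hf).integrable_of_hasCompactSupport
    (HasCompactSupport.of_compactSpace _)

lemma fourierCoeff_translate (f : AddCircle (1:ℝ) → ℂ) (a : ℝ) (n : ℤ) :
    fourierCoeff (fun t => f (t + (a : AddCircle (1:ℝ)))) n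
      = fourier n (a : AddCircle (1:ℝ)) * fourierCoeff f n := by
  have h1 : ∀ t : AddCircle (1:ℝ), fourier (-n) t • f (t + (a : AddCircle (1:ℝ)))
      = (fun s => fourier (-n) (s - (a : AddCircle (1:ℝ))) • f s) (t + (a : AddCircle (1:ℝ))) := by
    intro t; simp
  rw [fourierCoeff]
  simp_rw [h1]
  rw [integral_add_right_eq_self (fun s => fourier (-n) (s - (a : AddCircle (1:ℝ))) • f s)
    (a : AddCircle (1:ℝ))]
  have h2 : ∀ s : AddCircle (1:ℝ), fourier (-n) (s - (a : AddCircle (1:ℝ))) • f s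
      = fourier n (a : AddCircle (1:ℝ)) • (fourier (-n) s • f s) := by
    intro s
    have h3 : fourier (-n) (-(a : AddCircle (1:ℝ))) = fourier n (a : AddCircle (1:ℝ)) := by
      simp [fourier_apply, smul_neg]
    have h4 : fourier (-n) (s + -(a : AddCircle (1:ℝ)))
        = fourier (-n) s * fourier (-n) (-(a : AddCircle (1:ℝ))) := by
      simp [fourier_apply, smul_add, AddCircle.toCircle_add]
    rw [sub_eq_add_neg, h4, h3, smul_smul, mul_comm]
  simp_rw [h2]
  rw [integral_smul, fourierCoeff, smul_eq_mul]

lemma fourierCoeff_fourier_mul (f : AddCircle (1:ℝ) → ℂ) (k n : ℤ) :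
    fourierCoeff (fun t => fourier k t * f t) n = fourierCoeff f (n - k) := by
  rw [fourierCoeff, fourierCoeff]
  congr 1
  funext t
  have h : fourier (-n) t * fourier k t = fourier (-(n - k)) t := by
    rw [← fourier_add]; congr 2; ring
  simp only [smul_eq_mul, ← mul_assoc, h]

lemma fourierCoeff_finsum {ι : Type*} (s : Finset ι) (g : ι → AddCircle (1:ℝ) → ℂ)
    (hg : ∀ i, Continuous (g i)) (n : ℤ) :
    fourierCoeff (fun t => ∑ i ∈ s, g i t) n = ∑ i ∈ s, fourierCoeff (g i) n := by
  simp only [fourierCoeff, Finset.smul_sum]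
  exact integral_finset_sum s (fun i _ => integrableAux (g i) (hg i) (-n))

lemma fourierCoeff_sub' (f g : AddCircle (1:ℝ) → ℂ) (hf : Continuous f) (hg : Continuous g)
    (n : ℤ) : fourierCoeff (fun t => f t - g t) n = fourierCoeff f n - fourierCoeff g n := by
  simp only [fourierCoeff, smul_sub]
  exact integral_sub (integrableAux f hf (-n)) (integrableAux g hg (-n))

lemma fourierCoeff_add' (f g : AddCircle (1:ℝ) → ℂ) (hf : Continuous f) (hg : Continuous g)
    (n : ℤ) : fourierCoeff (fun t => f t + g t) n = fourierCoeff f n + fourierCoeff g n := by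
  simp only [fourierCoeff, smul_add]
  exact integral_add (integrableAux f hf (-n)) (integrableAux g hg (-n))

lemma summable_sq_fourierCoeff (g : AddCircle (1:ℝ) → ℂ) (hg : Continuous g) :
    Summable (fun n : ℤ => ‖fourierCoeff g n‖ ^ 2) := by
  have h := (lp.memℓp (fourierBasis.repr (toLp (E := ℂ) 2 haarAddCircle ℂ ⟨g, hg⟩))).summable
    (by norm_num : 0 < (2 : ENNReal).toReal)
  have he : ∀ n : ℤ, fourierBasis.repr (toLp (E := ℂ) 2 haarAddCircle ℂ ⟨g, hg⟩) n
      = fourierCoeff g n := by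
    intro n
    rw [fourierBasis_repr, fourierCoeff_toLp]
    rfl
  simp only [he] at h
  convert h using 2 with n
  rw [ENNReal.toReal_ofNat]
  rw [show ((2:ℝ) = ((2:ℕ):ℝ)) by norm_num, Real.rpow_natCast]

lemma eq_zero_of_fourierCoeff_eq_zero (g : AddCircle (1:ℝ) → ℂ) (hg : Continuous g)
    (h : ∀ n : ℤ, fourierCoeff g n = 0) : ∀ t, g t = 0 := by
  have h0 : fourierBasis.repr (toLp (E := ℂ) 2 haarAddCircle ℂ ⟨g, hg⟩) = 0 := by
    ext n
    rw [fourierBasis_repr, fourierCoeff_toLp]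
    exact h n
  have h1 : toLp (E := ℂ) 2 haarAddCircle ℂ (⟨g, hg⟩ : C(AddCircle (1:ℝ), ℂ)) = 0 := by
    apply fourierBasis.repr.injective
    rw [h0, map_zero]
  have h2 : (⟨g, hg⟩ : C(AddCircle (1:ℝ), ℂ)) = 0 := by
    apply toLp_injective (μ := (haarAddCircle : Measure (AddCircle (1:ℝ)))) (𝕜 := ℂ) (p := 2)
    rw [h1, map_zero]
  intro t
  exact DFunLike.congr_fun h2 t

lemma sumIccSplit (l : ℕ) (F : ℤ → ℂ) : ∑ k ∈ Finset.Icc (-(l:ℤ)) l, F k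
    = F l + ∑ j ∈ Finset.range (2*l), F ((l:ℤ)-1-j) := by
  have hset : Finset.Icc (-(l:ℤ)) l
      = insert (l:ℤ) ((Finset.range (2*l)).image (fun j : ℕ => (l:ℤ)-1-j)) := by
    ext k
    simp only [Finset.mem_insert, Finset.mem_image, Finset.mem_range, Finset.mem_Icc]
    constructor
    · intro ⟨h1,h2⟩
      rcases eq_or_lt_of_le h2 with h|h
      · left; omega
      · right; exact ⟨((l:ℤ)-1-k).toNat, by omega, by omega⟩
    · rintro (rfl|⟨j,hj,rfl⟩) <;> omega
  rw [hset, Finset.sum_insert, Finset.sum_image]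
  · intro a _ b _ h; have h' : ((l:ℤ)-1-a) = (l:ℤ)-1-b := h; omega
  · simp only [Finset.mem_image, Finset.mem_range]
    rintro ⟨j, hj, h⟩; omega

lemma sumnegIcc (d : ℕ) (F : ℤ → ℂ) :
    ∑ k ∈ Finset.Icc (-(d:ℤ)) d, F k = ∑ k ∈ Finset.Icc (-(d:ℤ)) d, F (-k) := by
  apply Finset.sum_nbij' (fun k => -k) (fun k => -k) <;> simp [Finset.mem_Icc] <;> omega

end FourierAux

/-- duality: reducibility to the identity produces a doubly degenerate
dual eigenvalue.  If `L^v_{E,w}(x) H(x) = H(x+α)` for some `H ∈ C^ω(𝕋, Sp_{2l×2}(ℝ))`,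
then the dual finite-range operator `(Lu)_n = Σ v̂_k u_{n+k} + w(nα) u_n` has two linearly
independent `ℓ²` eigenfunctions with eigenvalue `E`. -/
theorem statement16
    (α : ℝ) (hα : Irrational α) (E : ℝ)
    (d l : ℕ) (hd : 1 ≤ d) (hl : 1 ≤ l)
    (vhat what : ℤ → ℝ)
    (hvsupp : ∀ k : ℤ, (d : ℤ) < |k| → vhat k = 0)
    (hveven : ∀ k : ℤ, vhat (-k) = vhat k) (hvlead : vhat (d : ℤ) ≠ 0)
    (hwsupp : ∀ k : ℤ, (l : ℤ) < |k| → what k = 0)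
    (hweven : ∀ k : ℤ, what (-k) = what k) (hwlead : what (l : ℤ) ≠ 0)
    (H : ℝ → Matrix (Fin (2*l)) (Fin 2) ℝ)
    (hHan : IsAnalyticPeriodic H)
    (hHsymp : ∀ x : ℝ, IsSymplCol l what (H x))
    (hconj : ∀ x : ℝ,
      dualMat l what (fun t => trigPoly d vhat (t : ℂ)) (E : ℂ) x * (H x).map Complex.ofReal
        = (H (x + α)).map Complex.ofReal) :
    ∃ u v : ℤ → ℂ,
      Summable (fun n : ℤ => ‖u n‖ ^ 2) ∧
      Summable (fun n : ℤ => ‖v n‖ ^ 2) ∧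
      LinearIndependent ℂ ![u, v] ∧
      (∀ n : ℤ,
        (∑ k ∈ Finset.Icc (-(d:ℤ)) (d:ℤ), (vhat k : ℂ) * u (n + k)) +
          trigPoly l what (((n : ℝ) * α : ℝ) : ℂ) * u n = (E : ℂ) * u n) ∧
      (∀ n : ℤ,
        (∑ k ∈ Finset.Icc (-(d:ℤ)) (d:ℤ), (vhat k : ℂ) * v (n + k)) +
          trigPoly l what (((n : ℝ) * α : ℝ) : ℂ) * v n = (E : ℂ) * v n) := by
  have h2l : 0 < 2*l := by omega
  set i0 : Fin (2*l) := ⟨0, h2l⟩ with hi0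
  set φ : Fin 2 → ℝ → ℝ := fun c x => H x i0 c with hφ
  have hHcont : ∀ (i : Fin (2*l)) (c : Fin 2), Continuous (fun x => H x i c) := by
    intro i c
    have h := (hHan.1 i c).continuousOn
    exact continuousOn_univ.mp h
  have hW : (what l : ℂ) ≠ 0 := Complex.ofReal_ne_zero.mpr hwlead
  -- step recursion from rows 1..2l-1
  have hstep : ∀ (c : Fin 2) (i : ℕ) (hi : i + 1 < 2*l) (x : ℝ),
      H (x+α) ⟨i+1, hi⟩ c = H x ⟨i, by omega⟩ c := by
    intro c i hi x
    have h := congrFun (congrFun (hconj x) ⟨i+1, hi⟩) c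
    rw [Matrix.mul_apply] at h
    have hsum : (∑ j, dualMat l what (fun t => trigPoly d vhat (t:ℂ)) (E:ℂ) x ⟨i+1, hi⟩ j
        * ((H x).map Complex.ofReal) j c) = ((H x ⟨i, by omega⟩ c : ℝ) : ℂ) := by
      rw [Finset.sum_eq_single (⟨i, by omega⟩ : Fin (2*l))]
      · simp [dualMat, Matrix.map_apply]
      · intro b _ hb
        have hbv : ¬ (i + 1 = (b:ℕ) + 1) := by
          intro h'
          exact hb (Fin.ext (show (b:ℕ) = i by omega))
        simp [dualMat, hbv]
        exact fun h' => absurd (Fin.ext h'.symm) hb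
      · simp
    rw [hsum, Matrix.map_apply] at h
    exact_mod_cast h.symm
  -- full recursion
  have hrec : ∀ (c : Fin 2) (i : ℕ) (hi : i < 2*l) (x : ℝ),
      H x ⟨i, hi⟩ c = φ c (x - i*α) := by
    intro c i
    induction i with
    | zero => intro hi x; simp [hφ, hi0]
    | succ i ih =>
      intro hi x
      have h1 : H x ⟨i+1, hi⟩ c = H (x - α) ⟨i, by omega⟩ c := by
        have h2 := hstep c i hi (x - α)
        rw [sub_add_cancel] at h2
        exact h2
      rw [h1, ih (by omega)]
      congr 1
      push_cast
      ring
  -- first-row relation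
  have hrow : ∀ (c : Fin 2) (x : ℝ),
      (∑ j ∈ Finset.range (2*l), ((what ((l:ℤ) - 1 - j) : ℂ) * ((φ c (x - j*α) : ℝ) : ℂ)))
        + (what l : ℂ) * ((φ c (x + α) : ℝ) : ℂ)
      = ((E:ℂ) - trigPoly d vhat (x:ℂ)) * ((φ c (x - ((l:ℝ)-1)*α) : ℝ) : ℂ) := by
    intro c x
    have h := congrFun (congrFun (hconj x) i0) c
    rw [Matrix.mul_apply] at h
    set A : Fin (2*l) → ℂ := fun j =>
      (if (j:ℕ) + 1 = l then (E:ℂ) - trigPoly d vhat (x:ℂ) - (what 0 : ℂ)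
        else -((what ((l:ℤ) - 1 - (j:ℕ)) : ℂ))) * ((H x j c : ℝ) : ℂ) with hA
    simp only [Matrix.map_apply] at h
    have h1 : (what l:ℂ)⁻¹ * ∑ j, A j = ((H (x+α) i0 c : ℝ) : ℂ) := by
      rw [Finset.mul_sum, ← h]
      apply Finset.sum_congr rfl
      intro j _
      simp [hA, dualMat, hi0, mul_assoc]
    have h2 : (∑ j, A j) = (what l : ℂ) * ((H (x+α) i0 c : ℝ) : ℂ) := by
      rw [← h1, ← mul_assoc, mul_inv_cancel₀ hW, one_mul]
    set j₀ : Fin (2*l) := ⟨l-1, by omega⟩ with hj₀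
    have hsplit : ∀ j : Fin (2*l), A j = -((what ((l:ℤ)-1-(j:ℕ)) : ℂ)) * ((H x j c : ℝ):ℂ)
        + (if j = j₀ then ((E:ℂ) - trigPoly d vhat (x:ℂ)) * ((H x j₀ c : ℝ):ℂ) else 0) := by
      intro j
      by_cases hj : j = j₀
      · subst hj
        have hc : (j₀:ℕ) + 1 = l := by
          show l - 1 + 1 = l
          omega
        have hz : (l:ℤ) - 1 - ((j₀:ℕ):ℤ) = 0 := by
          show (l:ℤ) - 1 - ((l-1:ℕ):ℤ) = 0
          rw [Nat.cast_sub hl]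
          push_cast
          ring
        simp only [hA, if_pos hc, if_pos rfl, hz, if_true]
        ring
      · have hc : ¬ ((j:ℕ) + 1 = l) := by
          intro h'
          exact hj (Fin.ext (show (j:ℕ) = l-1 by omega))
        simp only [hA, if_neg hc, if_neg hj, add_zero]
    rw [Finset.sum_congr rfl (fun j _ => hsplit j), Finset.sum_add_distrib,
      Finset.sum_ite_eq' Finset.univ j₀] at h2
    simp only [Finset.mem_univ, if_true] at h2
    have h3 : (∑ j ∈ Finset.range (2*l), ((what ((l:ℤ) - 1 - j) : ℂ) * ((φ c (x - j*α) : ℝ) : ℂ)))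
        = ∑ j : Fin (2*l), ((what ((l:ℤ)-1-(j:ℕ)) : ℂ) * ((H x j c : ℝ):ℂ)) := by
      rw [← Fin.sum_univ_eq_sum_range]
      apply Finset.sum_congr rfl
      intro j _
      have hj : (H x j c : ℝ) = φ c (x - (j:ℕ)*α) := hrec c j j.isLt x
      rw [hj]
    have h4 : ((H x j₀ c : ℝ):ℂ) = ((φ c (x - ((l:ℝ)-1)*α) : ℝ):ℂ) := by
      have h5 : (H x j₀ c : ℝ) = φ c (x - ((l-1 : ℕ):ℝ)*α) := hrec c (l-1) (by omega) x
      rw [h5]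
      congr 2
      rw [Nat.cast_sub hl]
      push_cast
      ring
    have h6 : ((H (x+α) i0 c : ℝ):ℂ) = ((φ c (x+α) : ℝ):ℂ) := rfl
    rw [h3]
    have h7 : (∑ j : Fin (2*l), -((what ((l:ℤ)-1-(j:ℕ)) : ℂ)) * ((H x j c : ℝ):ℂ))
        = -∑ j : Fin (2*l), ((what ((l:ℤ)-1-(j:ℕ)) : ℂ)) * ((H x j c : ℝ):ℂ) := by
      simp [neg_mul]
    rw [h7, h4, h6] at h2
    linear_combination -h2
  -- reindexed functional equation on ℝ
  set G : Fin 2 → ℝ → ℂ := fun c y => ((φ c (y - ((l:ℝ)-1)*α) : ℝ) : ℂ) with hG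
  have hGcont : ∀ c, Continuous (G c) := by
    intro c
    exact Complex.continuous_ofReal.comp ((hHcont i0 c).comp (continuous_sub_right (((l:ℝ)-1)*α)))
  have hGper : ∀ c, Function.Periodic (G c) 1 := by
    intro c x
    have harg : (x + 1 - ((l:ℝ)-1)*α) = (x - ((l:ℝ)-1)*α) + 1 := by ring
    simp only [hG, hφ, harg, hHan.2]
  have hstar : ∀ (c : Fin 2) (x : ℝ),
      ∑ k ∈ Finset.Icc (-(l:ℤ)) l, (what k : ℂ) * G c (x + k*α)
        = ((E:ℂ) - trigPoly d vhat (x:ℂ)) * G c x := by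
    intro c x
    rw [sumIccSplit l (fun k => (what k : ℂ) * G c (x + k*α))]
    have e1 : G c (x + ((l:ℤ):ℝ)*α) = ((φ c (x + α) : ℝ) : ℂ) := by
      simp only [hG]
      rw [show x + ((l:ℤ):ℝ)*α - ((l:ℝ)-1)*α = x + α by push_cast; ring]
    have e2 : ∀ j ∈ Finset.range (2*l),
        (what ((l:ℤ)-1-j) : ℂ) * G c (x + (((l:ℤ)-1-j : ℤ):ℝ)*α)
          = (what ((l:ℤ)-1-j):ℂ) * ((φ c (x - j*α) : ℝ):ℂ) := by
      intro j _
      congr 1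
      simp only [hG]
      rw [show x + (((l:ℤ)-1-j : ℤ):ℝ)*α - ((l:ℝ)-1)*α = x - j*α by push_cast; ring]
    rw [e1, Finset.sum_congr rfl e2]
    have e3 : G c x = ((φ c (x - ((l:ℝ)-1)*α) : ℝ):ℂ) := rfl
    rw [e3, add_comm]
    exact hrow c x
  -- lift to the circle
  set Gl : Fin 2 → AddCircle (1:ℝ) → ℂ := fun c => (hGper c).lift with hGl
  have hGlcont : ∀ c, Continuous (Gl c) := fun c => continuous_coinduced_dom.mpr (hGcont c)
  have hGlcoe : ∀ (c : Fin 2) (x : ℝ), Gl c ((x : ℝ) : AddCircle (1:ℝ)) = G c x := by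
    intro c x
    exact Function.Periodic.lift_coe (hGper c) x
  set u' : Fin 2 → ℤ → ℂ := fun c n => fourierCoeff (Gl c) n with hu'
  -- the functional identity on the circle
  have hAfun : ∀ c : Fin 2,
      (fun t => ∑ k ∈ Finset.Icc (-(l:ℤ)) l, (what k : ℂ)
          * Gl c (t + ((k*α : ℝ) : AddCircle (1:ℝ))))
      = (fun t => (E:ℂ) * Gl c t
          - (∑ k ∈ Finset.Icc (-(d:ℤ)) d, (vhat k : ℂ) * fourier k t) * Gl c t) := by
    intro c
    funext t
    induction t using QuotientAddGroup.induction_on with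
    | H x =>
      have hcoe : ∀ k : ℤ, (((x : ℝ) : AddCircle (1:ℝ)) + ((k*α : ℝ) : AddCircle (1:ℝ)))
          = ((x + k*α : ℝ) : AddCircle (1:ℝ)) := by
        intro k
        norm_cast
      have hterm : ∀ k : ℤ, (what k : ℂ) * Gl c (((x : ℝ) : AddCircle (1:ℝ))
            + ((k*α : ℝ) : AddCircle (1:ℝ))) = (what k : ℂ) * G c (x + k*α) := by
        intro k
        rw [hcoe k, hGlcoe c (x + k*α)]
      rw [Finset.sum_congr rfl (fun k _ => hterm k), hGlcoe c x]
      have hv : trigPoly d vhat (x:ℂ)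
          = ∑ k ∈ Finset.Icc (-(d:ℤ)) d, (vhat k : ℂ) * fourier k ((x:ℝ) : AddCircle (1:ℝ)) := by
        rw [trigPoly]
        apply Finset.sum_congr rfl
        intro k _
        rw [fourier_coe_apply]
        norm_num
      rw [← hv]
      linear_combination hstar c x
  -- Fourier coefficients of both sides
  have hcoeffEq : ∀ (c : Fin 2) (n : ℤ),
      (∑ k ∈ Finset.Icc (-(l:ℤ)) l, (what k : ℂ)
          * (fourier n (((k*α : ℝ)) : AddCircle (1:ℝ)) * u' c n))
      = (E:ℂ) * u' c n - ∑ k ∈ Finset.Icc (-(d:ℤ)) d, (vhat k : ℂ) * u' c (n - k) := by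
    intro c n
    have h := congrArg (fun f => fourierCoeff f n) (hAfun c)
    rw [fourierCoeff_finsum (Finset.Icc (-(l:ℤ)) l)
      (fun k t => (what k : ℂ) * Gl c (t + ((k*α : ℝ) : AddCircle (1:ℝ))))
      (fun k => continuous_const.mul ((hGlcont c).comp (continuous_add_right _))) n] at h
    have hL : ∀ k ∈ Finset.Icc (-(l:ℤ)) l,
        fourierCoeff (fun t => (what k : ℂ) * Gl c (t + ((k*α : ℝ) : AddCircle (1:ℝ)))) n
          = (what k : ℂ) * (fourier n (((k*α : ℝ)) : AddCircle (1:ℝ)) * u' c n) := by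
      intro k _
      rw [fourierCoeff.const_mul (fun t => Gl c (t + ((k*α : ℝ) : AddCircle (1:ℝ)))) _ n,
        fourierCoeff_translate (Gl c) (k*α) n]
    rw [Finset.sum_congr rfl hL] at h
    rw [h]
    have hsub := fourierCoeff_sub' (fun t => (E:ℂ) * Gl c t)
      (fun t => (∑ k ∈ Finset.Icc (-(d:ℤ)) d, (vhat k : ℂ) * fourier k t) * Gl c t)
      (continuous_const.mul (hGlcont c))
      ((by fun_prop : Continuous (fun t : AddCircle (1:ℝ) =>
          ∑ k ∈ Finset.Icc (-(d:ℤ)) d, (vhat k : ℂ) * fourier k t)).mul (hGlcont c)) n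
    rw [hsub, fourierCoeff.const_mul (Gl c) _ n]
    congr 1
    have hprod : (fun t => (∑ k ∈ Finset.Icc (-(d:ℤ)) d, (vhat k : ℂ) * fourier k t) * Gl c t)
        = fun t => ∑ k ∈ Finset.Icc (-(d:ℤ)) d, (vhat k : ℂ) * (fourier k t * Gl c t) := by
      funext t
      rw [Finset.sum_mul]
      apply Finset.sum_congr rfl
      intro k _
      ring
    rw [hprod, fourierCoeff_finsum _ (fun k t => (vhat k : ℂ) * (fourier k t * Gl c t))
      (fun k => continuous_const.mul (((fourier k).continuous).mul (hGlcont c))) n]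
    apply Finset.sum_congr rfl
    intro k _
    rw [fourierCoeff.const_mul (fun t => fourier k t * Gl c t) _ n,
      fourierCoeff_fourier_mul (Gl c) k n]
  -- phase sum equals the dual trig polynomial
  have hphase : ∀ n : ℤ,
      (∑ k ∈ Finset.Icc (-(l:ℤ)) l, (what k : ℂ) * fourier n (((k*α : ℝ)) : AddCircle (1:ℝ)))
        = trigPoly l what (((n : ℝ) * α : ℝ) : ℂ) := by
    intro n
    rw [trigPoly]
    apply Finset.sum_congr rfl
    intro k _
    rw [fourier_coe_apply]
    congr 1
    push_cast
    ring
  -- the eigenvalue equation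
  have heq : ∀ (c : Fin 2) (n : ℤ),
      (∑ k ∈ Finset.Icc (-(d:ℤ)) (d:ℤ), (vhat k : ℂ) * u' c (n + k)) +
        trigPoly l what (((n : ℝ) * α : ℝ) : ℂ) * u' c n = (E : ℂ) * u' c n := by
    intro c n
    have h := hcoeffEq c n
    have h1 : (∑ k ∈ Finset.Icc (-(l:ℤ)) l, (what k : ℂ)
        * (fourier n (((k*α : ℝ)) : AddCircle (1:ℝ)) * u' c n))
        = trigPoly l what (((n : ℝ) * α : ℝ) : ℂ) * u' c n := by
      rw [← hphase n, Finset.sum_mul]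
      apply Finset.sum_congr rfl
      intro k _
      ring
    have h2 : (∑ k ∈ Finset.Icc (-(d:ℤ)) d, (vhat k : ℂ) * u' c (n - k))
        = ∑ k ∈ Finset.Icc (-(d:ℤ)) d, (vhat k : ℂ) * u' c (n + k) := by
      rw [sumnegIcc d (fun k => (vhat k : ℂ) * u' c (n - k))]
      apply Finset.sum_congr rfl
      intro k _
      rw [hveven k, sub_neg_eq_add]
    rw [h1, h2] at h
    linear_combination h
  -- summability
  have hsumm : ∀ c, Summable (fun n : ℤ => ‖u' c n‖ ^ 2) :=
    fun c => summable_sq_fourierCoeff (Gl c) (hGlcont c)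
  -- linear independence
  have hker : ∀ (p : Fin 2 → ℝ), (∀ y : ℝ, p 0 * φ 0 y + p 1 * φ 1 y = 0) → p = 0 := by
    intro p hp
    have hv : ∀ y : ℝ, H y *ᵥ p = 0 := by
      intro y
      funext j
      have hdp : (H y *ᵥ p) j = H y j 0 * p 0 + H y j 1 * p 1 := by
        simp [Matrix.mulVec, dotProduct, Fin.sum_univ_two]
      have e0 : H y j 0 = φ 0 (y - (j:ℕ)*α) := hrec 0 j.val j.isLt y
      have e1 : H y j 1 = φ 1 (y - (j:ℕ)*α) := hrec 1 j.val j.isLt y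
      rw [hdp, e0, e1]
      have := hp (y - (j:ℕ)*α)
      simp only [Pi.zero_apply]
      linarith
    have hsympl := hHsymp 0
    rw [IsSymplCol] at hsympl
    have hJ : Jmat *ᵥ p = 0 := by
      rw [← hsympl, ← Matrix.mulVec_mulVec, hv 0, Matrix.mulVec_zero]
    have h0 : p 1 = 0 := by
      have := congrFun hJ 0
      simpa [Jmat, Matrix.mulVec, dotProduct, Fin.sum_univ_two, Matrix.vecHead, Matrix.vecTail] using this
    have h1 : p 0 = 0 := by
      have := congrFun hJ 1
      have h' := this
      simp [Jmat, Matrix.mulVec, dotProduct, Fin.sum_univ_two, Matrix.vecHead, Matrix.vecTail] at h'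
      linarith
    funext i
    fin_cases i <;> simp [h0, h1]
  have hlin : LinearIndependent ℂ ![u' 0, u' 1] := by
    rw [LinearIndependent.pair_iff]
    intro s t hst
    have hcoeff0 : ∀ n : ℤ, fourierCoeff (fun x => s * Gl 0 x + t * Gl 1 x) n = 0 := by
      intro n
      rw [fourierCoeff_add' (fun x => s * Gl 0 x) (fun x => t * Gl 1 x) (continuous_const.mul (hGlcont 0))
        (continuous_const.mul (hGlcont 1)) n,
        fourierCoeff.const_mul (Gl 0) s n, fourierCoeff.const_mul (Gl 1) t n]
      have := congrFun hst n
      simpa [hu'] using this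
    have hzero : ∀ x : AddCircle (1:ℝ), s * Gl 0 x + t * Gl 1 x = 0 :=
      eq_zero_of_fourierCoeff_eq_zero _
        ((continuous_const.mul (hGlcont 0)).add (continuous_const.mul (hGlcont 1))) hcoeff0
    have hR : ∀ y : ℝ, s * ((φ 0 y : ℝ):ℂ) + t * ((φ 1 y : ℝ):ℂ) = 0 := by
      intro y
      have h := hzero (((y + ((l:ℝ)-1)*α : ℝ)) : AddCircle (1:ℝ))
      rw [hGlcoe 0, hGlcoe 1] at h
      simp only [hG] at h
      rw [show y + ((l:ℝ)-1)*α - ((l:ℝ)-1)*α = y by ring] at h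
      exact h
    have hRe : (![s.re, t.re] : Fin 2 → ℝ) = 0 := by
      apply hker
      intro y
      have h := congrArg Complex.re (hR y)
      simpa [Complex.add_re, Complex.mul_re] using h
    have hIm : (![s.im, t.im] : Fin 2 → ℝ) = 0 := by
      apply hker
      intro y
      have h := congrArg Complex.im (hR y)
      simpa [Complex.add_im, Complex.mul_im] using h
    constructor
    · apply Complex.ext
      · exact congrFun hRe 0
      · exact congrFun hIm 0
    · apply Complex.ext
      · exact congrFun hRe 1
      · exact congrFun hIm 1
  exact ⟨u' 0, u' 1, hsumm 0, hsumm 1, hlin, heq 0, heq 1⟩
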